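/- arXiv:2603.25490 — 4 statements merged into one kernel-verified Lean document; each statement's English description precedes it below -/
import Mathlib

section
/- Exact penalty closes the duality gap for finite feasible sets: if S is a finite nonempty set with at least one point satisfying r = 0, and z* = min{c(x) : (x,p) ∈ S, r(x,p) = 0}, then for any λ ∈ ℝⁿ there exists a finite ρ(λ) ≥ 0 such that for all ρ ≥ ρ(λ), inf_{(x,p)∈S} [c(x) + ⟨λ, r(x,p)⟩ + ρ‖r(x,p)‖₁] = z*. -/
open Finset

/-- Exact penalty closes the duality gap for finite feasible sets: if `S` is finite and
nonempty with at least one point satisfying `r = 0`, and `z*` is the minimal feasible cost,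
then for any `λ` there exists a finite `ρ(λ) ≥ 0` such that for all `ρ ≥ ρ(λ)` the
augmented Lagrangian dual value equals `z*`. -/
theorem ald_exact_penalty_finite {X P : Type*} {n : ℕ} (S : Set (X × P))
    (hFin : S.Finite) (hS : S.Nonempty)
    (c : X → ℝ) (r : X × P → Fin n → ℝ)
    (hfeas : ∃ s ∈ S, r s = 0)
    (zstar : ℝ)
    (hzstar : IsLeast {v : ℝ | ∃ s ∈ S, r s = 0 ∧ v = c s.1} zstar) :
    ∀ lam : Fin n → ℝ, ∃ ρ₀ : ℝ, 0 ≤ ρ₀ ∧ ∀ ρ : ℝ, ρ₀ ≤ ρ →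
      sInf {v : ℝ | ∃ s ∈ S,
        v = c s.1 + (∑ i, lam i * r s i) + ρ * ∑ i, |r s i|} = zstar := by
  intro lam
  classical
  set T := hFin.toFinset with hT
  have hTne : T.Nonempty := by
    rwa [hT, Set.Finite.toFinset_nonempty]
  -- penalty threshold for each point
  set g : X × P → ℝ := fun s =>
    if h : (∑ i, |r s i|) = 0 then 0
    else (zstar - c s.1 - ∑ i, lam i * r s i) / (∑ i, |r s i|) with hg
  set ρ₀ : ℝ := max 0 (T.sup' hTne g) with hρ₀
  refine ⟨ρ₀, le_max_left _ _, ?_⟩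
  intro ρ hρ
  have habs_nonneg : ∀ s : X × P, 0 ≤ ∑ i, |r s i| := fun s =>
    Finset.sum_nonneg fun i _ => abs_nonneg _
  -- key lower bound
  have hlb : ∀ s ∈ S, zstar ≤ c s.1 + (∑ i, lam i * r s i) + ρ * ∑ i, |r s i| := by
    intro s hs
    by_cases h0 : (∑ i, |r s i|) = 0
    · have hr0 : r s = 0 := by
        funext i
        have := (Finset.sum_eq_zero_iff_of_nonneg (fun i _ => abs_nonneg (r s i))).1 h0
        have := this i (Finset.mem_univ i)
        simpa [abs_eq_zero] using this
      have h1 : (∑ i, lam i * r s i) = 0 := by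
        simp [hr0]
      have h2 : c s.1 ∈ {v : ℝ | ∃ s ∈ S, r s = 0 ∧ v = c s.1} := ⟨s, hs, hr0, rfl⟩
      have := hzstar.2 h2
      simpa [h0, h1] using this
    · have hpos : 0 < ∑ i, |r s i| := lt_of_le_of_ne (habs_nonneg s) (Ne.symm h0)
      have hgs : g s ≤ ρ := by
        refine le_trans ?_ hρ
        refine le_trans (Finset.le_sup' g ?_) (le_max_right _ _)
        rwa [hT, Set.Finite.mem_toFinset]
      have hgs' : g s = (zstar - c s.1 - ∑ i, lam i * r s i) / (∑ i, |r s i|) := by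
        simp [hg, h0]
      have : (zstar - c s.1 - ∑ i, lam i * r s i) / (∑ i, |r s i|) ≤ ρ := hgs' ▸ hgs
      have := (div_le_iff₀ hpos).1 this
      linarith
  -- zstar is attained
  obtain ⟨s₀, hs₀S, hs₀r, hs₀c⟩ := hzstar.1
  have hmem : zstar ∈ {v : ℝ | ∃ s ∈ S,
      v = c s.1 + (∑ i, lam i * r s i) + ρ * ∑ i, |r s i|} := by
    exact ⟨s₀, hs₀S, by simp [hs₀r, hs₀c]⟩
  have hbdd : ∀ v ∈ {v : ℝ | ∃ s ∈ S,
      v = c s.1 + (∑ i, lam i * r s i) + ρ * ∑ i, |r s i|}, zstar ≤ v := by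
    rintro v ⟨s, hs, rfl⟩
    exact hlb s hs
  exact le_antisymm (csInf_le ⟨zstar, hbdd⟩ hmem) (le_csInf ⟨zstar, hmem⟩ hbdd)
end

section
/- If the duality gap is closed at (λ*, ρ), i.e. inf_{(x,p)∈S} L_ρ(x,p,λ*) = z* where z* is the primal optimal value attained at a feasible point (x*,p*), then any minimizer (x̂,p̂) of L_ρ(·,·,λ*) with strictly larger penalty ρ' > ρ must be primal feasible (r(x̂,p̂) = 0) and primal optimal (c(x̂) = z*). -/
open Finset

/-- If the duality gap is closed at `(λ*, ρ)`, i.e. `inf_{S} L_ρ(·,·,λ*) = z*` with `z*`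
the primal optimal value attained at a feasible `(x*,p*)`, then any minimizer of
`L_{ρ'}(·,·,λ*)` over `S` with `ρ' > ρ` is primal feasible and primal optimal. -/
theorem ald_minimizer_at_larger_penalty_is_optimal {X P : Type*} {n : ℕ}
    (S : Set (X × P)) (c : X → ℝ) (r : X × P → Fin n → ℝ)
    (xpstar : X × P) (hmem : xpstar ∈ S) (hfeas : r xpstar = 0)
    (hopt : ∀ s ∈ S, r s = 0 → c xpstar.1 ≤ c s.1)
    (zstar : ℝ) (hzstar : zstar = c xpstar.1)
    (lamstar : Fin n → ℝ) (ρ ρ' : ℝ) (hρ : 0 ≤ ρ) (hρ' : ρ < ρ')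
    (hSD : IsGLB {v : ℝ | ∃ s ∈ S,
      v = c s.1 + (∑ i, lamstar i * r s i) + ρ * ∑ i, |r s i|} zstar)
    (xphat : X × P) (hhat : xphat ∈ S)
    (hmin : ∀ s ∈ S,
      c xphat.1 + (∑ i, lamstar i * r xphat i) + ρ' * ∑ i, |r xphat i|
        ≤ c s.1 + (∑ i, lamstar i * r s i) + ρ' * ∑ i, |r s i|) :
    r xphat = 0 ∧ c xphat.1 = zstar := by
  set A : ℝ := ∑ i, |r xphat i| with hA
  have hA0 : 0 ≤ A := Finset.sum_nonneg fun i _ => abs_nonneg _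
  -- lower bound: z* ≤ L_ρ(xphat)
  have hlb : zstar ≤ c xphat.1 + (∑ i, lamstar i * r xphat i) + ρ * A :=
    hSD.1 ⟨xphat, hhat, rfl⟩
  -- upper bound: L_{ρ'}(xphat) ≤ z*
  have hub : c xphat.1 + (∑ i, lamstar i * r xphat i) + ρ' * A ≤ zstar := by
    have := hmin xpstar hmem
    simpa [hfeas, hzstar] using this
  have hAzero : A = 0 := by nlinarith
  have hr : r xphat = 0 := by
    funext i
    have h0 : |r xphat i| = 0 := by
      have := (Finset.sum_eq_zero_iff_of_nonneg
        (fun i _ => abs_nonneg (r xphat i))).1 hAzero i (Finset.mem_univ i)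
      exact this
    simpa using abs_eq_zero.mp h0
  have hsum : (∑ i, lamstar i * r xphat i) = 0 := by
    simp [hr]
  refine ⟨hr, le_antisymm ?_ ?_⟩
  · -- c xphat.1 ≤ zstar
    nlinarith [hub]
  · rw [hzstar]; exact hopt xphat hhat hr
end

section
/- Incentive compatibility of ALD pricing: suppose strong duality holds, i.e. min over x ∈ ∏ᵢ Xᵢ, p ∈ P of L_ρ(x,p,λ*) = ∑ᵢ cᵢ(xᵢ*) where (x*,p*) is primal optimal with zero residuals, and suppose P contains p* and satisfies ∑ₐ pₐ = 0 for all p ∈ P with the balance term correction Ψ(p*) = 0. Then for each order i, the reference dispatch xᵢ* minimizes the individual objective fᵢ(xᵢ) = cᵢ(xᵢ) − ∑ₐ λₐ* qₐᵢ xᵢ + ρ ∑ₐ |qₐᵢ(xᵢ − xᵢ*)| − ρ ∑ₐ qₐᵢ xᵢ* over Xᵢ. -/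
open Finset

/-- Incentive compatibility of ALD pricing: under strong duality of the augmented
Lagrangian at `(λ*, ρ)` (the minimum of `L_ρ(·,·,λ*)` over the decomposed feasible sets
equals the primal optimal value `∑ᵢ cᵢ xᵢ*`), market balance `∑ₐ pₐ = 0` on `P`, and
nonnegativity of the net-injection correction term `Ψ`, every order's reference dispatch
`xᵢ*` minimizes its individual deviation-penalized objective over `Xᵢ`. -/
theorem ald_incentive_compatibility {A I : Type*} [Fintype A] [Fintype I]
    (Xi : I → Set ℝ) (P : Set (A → ℝ)) (q : A → I → ℝ) (c : I → ℝ)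
    (lam : A → ℝ) (ρ : ℝ) (hρ : 0 ≤ ρ)
    (xstar : I → ℝ) (pstar : A → ℝ)
    (hx : ∀ i, xstar i ∈ Xi i) (hp : pstar ∈ P)
    (hfeas : ∀ a, pstar a = ∑ i, q a i * xstar i)
    (hbal : ∀ p ∈ P, ∑ a, p a = 0)
    (hPsi : ∀ p ∈ P,
      0 ≤ (∑ a, lam a * (p a - pstar a)) + ρ * ∑ a, |p a - pstar a|)
    (hSD : IsLeast {v : ℝ | ∃ (x : I → ℝ) (p : A → ℝ),
        (∀ i, x i ∈ Xi i) ∧ p ∈ P ∧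
        v = (∑ i, c i * x i) + (∑ a, lam a * (p a - ∑ i, q a i * x i))
          + ρ * ∑ a, |p a - ∑ i, q a i * x i|}
      (∑ i, c i * xstar i)) :
    ∀ i, ∀ y ∈ Xi i,
      (c i * xstar i - (∑ a, lam a * (q a i * xstar i))
          + ρ * (∑ a, |q a i * (xstar i - xstar i)|) - ρ * ∑ a, q a i * xstar i)
        ≤ (c i * y - (∑ a, lam a * (q a i * y))
          + ρ * (∑ a, |q a i * (y - xstar i)|) - ρ * ∑ a, q a i * xstar i) := by
  classical
  intro i y hy
  set x : I → ℝ := Function.update xstar i y with hxdef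
  have hxmem : ∀ j, x j ∈ Xi j := by
    intro j
    rcases eq_or_ne j i with h | h
    · subst h; simpa [hxdef] using hy
    · simpa [hxdef, Function.update_of_ne h] using hx j
  have key : ∀ a, ∑ j, q a j * x j = (∑ j, q a j * xstar j) + q a i * (y - xstar i) := by
    intro a
    have hfun : (fun j => q a j * x j)
        = Function.update (fun j => q a j * xstar j) i (q a i * y) := by
      funext j
      rcases eq_or_ne j i with h | h
      · subst h; simp [hxdef]
      · simp [hxdef, Function.update_of_ne h]
    rw [hfun, Finset.sum_update_of_mem (mem_univ i)]
    have : ∑ j, q a j * xstar j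
        = q a i * xstar i + ∑ j ∈ univ.erase i, q a j * xstar j :=
      (Finset.add_sum_erase _ _ (mem_univ i)).symm
    rw [this, ← Finset.sdiff_singleton_eq_erase]; ring
  have hcsum : ∑ j, c j * x j = (∑ j, c j * xstar j) + (c i * y - c i * xstar i) := by
    have hfun : (fun j => c j * x j)
        = Function.update (fun j => c j * xstar j) i (c i * y) := by
      funext j
      rcases eq_or_ne j i with h | h
      · subst h; simp [hxdef]
      · simp [hxdef, Function.update_of_ne h]
    rw [hfun, Finset.sum_update_of_mem (mem_univ i)]
    have : ∑ j, c j * xstar j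
        = c i * xstar i + ∑ j ∈ univ.erase i, c j * xstar j :=
      (Finset.add_sum_erase _ _ (mem_univ i)).symm
    rw [this, ← Finset.sdiff_singleton_eq_erase]; ring
  have hmem : ((∑ j, c j * x j) + (∑ a, lam a * (pstar a - ∑ j, q a j * x j))
      + ρ * ∑ a, |pstar a - ∑ j, q a j * x j|) ∈ {v : ℝ | ∃ (x : I → ℝ) (p : A → ℝ),
        (∀ i, x i ∈ Xi i) ∧ p ∈ P ∧
        v = (∑ i, c i * x i) + (∑ a, lam a * (p a - ∑ i, q a i * x i))
          + ρ * ∑ a, |p a - ∑ i, q a i * x i|} :=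
    ⟨x, pstar, hxmem, hp, rfl⟩
  have hLB := hSD.2 hmem
  have hres : ∀ a, pstar a - ∑ j, q a j * x j = q a i * (xstar i - y) := by
    intro a; rw [key a, hfeas a]; ring
  rw [hcsum] at hLB
  simp only [hres] at hLB
  have h1 : ∑ a, lam a * (q a i * (xstar i - y))
      = (∑ a, lam a * (q a i * xstar i)) - ∑ a, lam a * (q a i * y) := by
    rw [← Finset.sum_sub_distrib]; congr 1; funext a; ring
  have h2 : ∀ a, |q a i * (xstar i - y)| = |q a i * (y - xstar i)| := by
    intro a; rw [← abs_neg]; congr 1; ring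
  simp only [h1, h2] at hLB
  have h3 : ∀ a, |q a i * (xstar i - xstar i)| = 0 := by intro a; simp
  simp only [h3, Finset.sum_const_zero, mul_zero]
  linarith
end

section
/- PAO remedy via transfer payment: for a demand order i (q < 0) with individual objective f(x) = c x − λ q x + ρ|q(x − x*)| − ρ q x*, adding the transfer payment Ω = −2ρ q x* replaces the last term by −ρ|q x*| (assuming x* ≥ 0), and the remedied objective g(x) = c x − λ q x + ρ|q(x − x*)| − ρ|q x*| satisfies g(0) = 0; consequently, if x* minimizes g over a feasible set containing 0, the remedied surplus −g(x*) is non-negative. -/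
/-- PAO remedy via transfer payment: for a demand order (`q < 0`) the remedied objective
`g(x) = cx − λqx + ρ|q(x − x*)| − ρ|qx*|` satisfies `g(0) = 0`; consequently, if `x*`
minimizes `g` over a feasible set containing `0`, the remedied surplus `−g(x*)` is
non-negative. -/
theorem ald_pao_remedy (q c lam ρ xstar : ℝ) (Xi : Set ℝ)
    (hq : q < 0) (hρ : 0 ≤ ρ) (hxnn : 0 ≤ xstar)
    (h0 : (0 : ℝ) ∈ Xi) (hxstar : xstar ∈ Xi)
    (hmin : ∀ x ∈ Xi,
      c * xstar - lam * q * xstar + ρ * |q * (xstar - xstar)| - ρ * |q * xstar|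
        ≤ c * x - lam * q * x + ρ * |q * (x - xstar)| - ρ * |q * xstar|) :
    (c * 0 - lam * q * 0 + ρ * |q * (0 - xstar)| - ρ * |q * xstar| = 0) ∧
      0 ≤ -(c * xstar - lam * q * xstar + ρ * |q * (xstar - xstar)|
            - ρ * |q * xstar|) := by
  have h1 : c * 0 - lam * q * 0 + ρ * |q * (0 - xstar)| - ρ * |q * xstar| = 0 := by
    have : |q * (0 - xstar)| = |q * xstar| := by
      rw [zero_sub, mul_neg, abs_neg]
    rw [this]; ring
  refine ⟨h1, ?_⟩
  have := hmin 0 h0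
  rw [h1] at this
  linarith
end
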